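/- Let p ≥ 1 and let C₀, C₁, …, C_p be p+1 pairwise distinct cycles in a graph such that any two of them are either vertex-disjoint or intersect in a path (their intersection graph is a path, possibly a single vertex). Then the number of vertices of degree at least 3 in the union graph C₀ ∪ C₁ ∪ ⋯ ∪ C_p is at most p·(p+1). -/

import Mathlib

open SimpleGraph

section Aux

variable {V : Type*} {G : SimpleGraph V}

/-- The start of a path has at most one neighbour in the path's subgraph. -/
lemma aux_start_deg_le_one {x y : V} (r : G.Walk x y) (hr : r.IsPath) :
    (r.toSubgraph.neighborSet x).ncard ≤ 1 := by
  cases r with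
  | nil =>
      simp [Walk.toSubgraph, neighborSet_singletonSubgraph]
  | @cons _ b _ h q =>
      rw [Walk.cons_isPath_iff] at hr
      have hsub : ((Walk.cons h q).toSubgraph.neighborSet x) ⊆ {b} := by
        intro w hw
        rw [Subgraph.mem_neighborSet] at hw
        rcases Subgraph.sup_adj.mp hw with h1 | h2
        · simp only [subgraphOfAdj_adj] at h1
          rcases Sym2.eq_iff.mp h1.symm with ⟨-, rfl⟩ | ⟨rfl, rfl⟩
          · rfl
          · exact absurd hw.adj_sub G.irrefl
        · exact absurd ((Walk.mem_verts_toSubgraph q).mp h2.fst_mem) hr.2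
      calc (((Walk.cons h q).toSubgraph).neighborSet x).ncard
          ≤ ({b} : Set V).ncard := Set.ncard_le_ncard hsub (Set.finite_singleton b)
        _ = 1 := Set.ncard_singleton b

/-- The end of a path has at most one neighbour in the path's subgraph. -/
lemma aux_end_deg_le_one {x y : V} (r : G.Walk x y) (hr : r.IsPath) :
    (r.toSubgraph.neighborSet y).ncard ≤ 1 := by
  have := aux_start_deg_le_one r.reverse hr.reverse
  rwa [Walk.toSubgraph_reverse] at this

/-- An interior vertex of a path has two distinct neighbours in the path's subgraph. -/
lemma aux_interior_two_neighbors :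
    ∀ {x y : V} (r : G.Walk x y), r.IsPath → ∀ {v : V},
      v ∈ r.support → v ≠ x → v ≠ y →
      ∃ a b : V, a ≠ b ∧ r.toSubgraph.Adj v a ∧ r.toSubgraph.Adj v b
  | x, _, Walk.nil, _, v, hv, hvx, _ => by
      simp only [Walk.support_nil, List.mem_singleton] at hv
      exact absurd hv hvx
  | x, y, @Walk.cons _ _ _ z _ h q, hr, v, hv, hvx, hvy => by
      rw [Walk.cons_isPath_iff] at hr
      rw [Walk.support_cons, List.mem_cons] at hv
      rcases hv with rfl | hv
      · exact absurd rfl hvx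
      by_cases hvz : v = z
      · subst hvz
        cases q with
        | nil => exact absurd rfl hvy
        | @cons _ w₂ _ h' q' =>
            refine ⟨x, w₂, ?_, ?_, ?_⟩
            · intro hxw
              apply hr.2
              rw [Walk.support_cons, List.mem_cons]
              exact Or.inr (hxw ▸ q'.start_mem_support)
            · exact Subgraph.sup_adj.mpr (Or.inl (by simp [h.symm]))
            · exact Subgraph.sup_adj.mpr (Or.inr
                (Subgraph.sup_adj.mpr (Or.inl (by simp [h']))))
      · obtain ⟨a, b, hab, ha, hb⟩ :=
          aux_interior_two_neighbors q hr.1 hv hvz hvy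
        exact ⟨a, b, hab, Subgraph.sup_adj.mpr (Or.inr ha),
          Subgraph.sup_adj.mpr (Or.inr hb)⟩

/-- The start of a cycle has at most two neighbours in the cycle's subgraph. -/
lemma aux_cycle_start_deg_le_two {v : V} (q : G.Walk v v) (hq : q.IsCycle) :
    (q.toSubgraph.neighborSet v).ncard ≤ 2 := by
  cases q with
  | nil => exact absurd hq Walk.IsCycle.not_of_nil
  | @cons _ b _ h q' =>
      rw [Walk.cons_isCycle_iff] at hq
      have hset : ((Walk.cons h q').toSubgraph.neighborSet v)
          = {b} ∪ q'.toSubgraph.neighborSet v := by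
        show ((G.subgraphOfAdj h ⊔ q'.toSubgraph).neighborSet v) = _
        rw [Subgraph.neighborSet_sup, neighborSet_fst_subgraphOfAdj]
      rw [hset]
      calc (({b} : Set V) ∪ q'.toSubgraph.neighborSet v).ncard
          ≤ ({b} : Set V).ncard + (q'.toSubgraph.neighborSet v).ncard :=
            Set.ncard_union_le _ _
        _ ≤ 1 + 1 := by
            have h1 := Set.ncard_singleton b
            have h2 := aux_end_deg_le_one q' hq.1
            omega
        _ = 2 := rfl

/-- Every vertex has at most two neighbours in a cycle's subgraph. -/
lemma aux_cycle_deg_le_two [DecidableEq V] {u : V} (c : G.Walk u u) (hc : c.IsCycle)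
    (v : V) : (c.toSubgraph.neighborSet v).ncard ≤ 2 := by
  by_cases hv : v ∈ c.support
  · have := aux_cycle_start_deg_le_two (c.rotate v hv) (hc.rotate hv)
    rwa [Walk.toSubgraph_rotate] at this
  · have : c.toSubgraph.neighborSet v = ∅ := by
      ext w
      simp only [Subgraph.mem_neighborSet, Set.mem_empty_iff_false, iff_false]
      intro hadj
      exact hv ((Walk.mem_verts_toSubgraph c).mp hadj.fst_mem)
    simp [this]

/-- Two paths with the same subgraph have the same endpoints: the start of the second
path is an endpoint of the first. -/
lemma aux_start_eq {x y x' y' : V} (r : G.Walk x y) (r' : G.Walk x' y')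
    (hr : r.IsPath) (hr' : r'.IsPath) (h : r.toSubgraph = r'.toSubgraph) :
    x' = x ∨ x' = y := by
  by_contra hcon
  push_neg at hcon
  have hx' : x' ∈ r.support := by
    rw [← Walk.mem_verts_toSubgraph, h]
    exact r'.start_mem_verts_toSubgraph
  obtain ⟨a, b, hab, ha, hb⟩ := aux_interior_two_neighbors r hr hx' hcon.1 hcon.2
  have h2 : 2 ≤ (r'.toSubgraph.neighborSet x').ncard := by
    rw [← h]
    have hfin : (r.toSubgraph.neighborSet x').Finite :=
      Walk.finite_neighborSet_toSubgraph r
    have hsub : ({a, b} : Set V) ⊆ r.toSubgraph.neighborSet x' := by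
      intro z hz
      rcases hz with rfl | hz
      · exact ha
      · rw [Set.mem_singleton_iff] at hz; subst hz; exact hb
    calc 2 = ({a, b} : Set V).ncard := (Set.ncard_pair hab).symm
      _ ≤ _ := Set.ncard_le_ncard hsub hfin
  have := aux_start_deg_le_one r' hr'
  omega

/-- Two paths with the same subgraph have the same endpoints: the end of the second
path is an endpoint of the first. -/
lemma aux_end_eq {x y x' y' : V} (r : G.Walk x y) (r' : G.Walk x' y')
    (hr : r.IsPath) (hr' : r'.IsPath) (h : r.toSubgraph = r'.toSubgraph) :
    y' = x ∨ y' = y := by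
  have := aux_start_eq r r'.reverse hr hr'.reverse
    (by rwa [Walk.toSubgraph_reverse])
  exact this

end Aux

/-- Let `p ≥ 1` and let `C₀, C₁, …, C_p` be `p + 1` pairwise distinct cycles
in a graph such that any two of them are either vertex-disjoint or intersect in a path (their
intersection graph is a path, possibly a single vertex).  Then the union graph
`C₀ ∪ C₁ ∪ ⋯ ∪ C_p` has at most `p·(p+1)` vertices of degree at least `3` (the degree of `v`
being the number of neighbours of `v` in the union subgraph). -/
theorem stmt_15 {V : Type*} [Fintype V] [DecidableEq V]
    (G : SimpleGraph V) (p : ℕ) (hp : 1 ≤ p)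
    (u : Fin (p + 1) → V) (c : (i : Fin (p + 1)) → G.Walk (u i) (u i))
    (hcyc : ∀ i, (c i).IsCycle)
    (hdist : ∀ i j, i ≠ j → (c i).toSubgraph ≠ (c j).toSubgraph)
    (hint : ∀ i j, i ≠ j →
      ((c i).toSubgraph.verts ∩ (c j).toSubgraph.verts = ∅) ∨
      ∃ (x y : V) (r : G.Walk x y), r.IsPath ∧
        r.toSubgraph = (c i).toSubgraph ⊓ (c j).toSubgraph) :
    Set.ncard {v : V | 3 ≤ ((⨆ i, (c i).toSubgraph).neighborSet v).ncard} ≤ p * (p + 1) := by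
  classical
  set S : Set V := {v : V | 3 ≤ ((⨆ i, (c i).toSubgraph).neighborSet v).ncard} with hS
  -- Step 1: every bad vertex is an endpoint of an intersection path of some pair i < j
  have key : ∀ v ∈ S, ∃ i j : Fin (p + 1), i < j ∧
      ∃ (x y : V) (r : G.Walk x y), r.IsPath ∧
        r.toSubgraph = (c i).toSubgraph ⊓ (c j).toSubgraph ∧ (v = x ∨ v = y) := by
    intro v hv
    rw [hS, Set.mem_setOf_eq] at hv
    set N : Fin (p + 1) → Set V := fun i => ((c i).toSubgraph).neighborSet v with hNdef
    have hN : (⨆ i, (c i).toSubgraph).neighborSet v = ⋃ i, N i := by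
      ext w
      simp only [Subgraph.mem_neighborSet, Subgraph.iSup_adj, hNdef, Set.mem_iUnion]
    have hfin : ∀ i, (N i).Finite := fun i => Walk.finite_neighborSet_toSubgraph (c i)
    have hle : ∀ i, (N i).ncard ≤ 2 := fun i => aux_cycle_deg_le_two (c i) (hcyc i) v
    rw [hN] at hv
    -- find i₀ with nonempty neighbour set
    have hex : ∃ i₀, (N i₀).Nonempty := by
      by_contra hne
      push_neg at hne
      have : (⋃ i, N i) = ∅ := Set.iUnion_eq_empty.mpr hne
      rw [this, Set.ncard_empty] at hv
      omega
    obtain ⟨i₀, w₀, hw₀⟩ := hex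
    -- find j contributing a new neighbour
    have hex2 : ∃ j w, w ∈ N j ∧ w ∉ N i₀ := by
      by_contra hc2
      push_neg at hc2
      have hsub : (⋃ i, N i) ⊆ N i₀ := by
        intro w hw
        rw [Set.mem_iUnion] at hw
        obtain ⟨i, hi⟩ := hw
        exact hc2 i w hi
      have := Set.ncard_le_ncard hsub (hfin i₀)
      have := hle i₀
      omega
    obtain ⟨j, w, hwj, hwi⟩ := hex2
    have hji : j ≠ i₀ := fun e => hwi (e ▸ hwj)
    have hvi : v ∈ (c i₀).toSubgraph.verts := (Subgraph.Adj.fst_mem hw₀)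
    have hvj : v ∈ (c j).toSubgraph.verts := (Subgraph.Adj.fst_mem hwj)
    rcases hint i₀ j hji.symm with hemp | ⟨x, y, r, hrp, hre⟩
    · exact absurd hemp (by
        rw [Set.eq_empty_iff_forall_notMem]
        push_neg
        exact ⟨v, hvi, hvj⟩)
    · -- v must be an endpoint of r
      have hvxy : v = x ∨ v = y := by
        by_contra hcon
        push_neg at hcon
        have hvr : v ∈ r.support := by
          rw [← Walk.mem_verts_toSubgraph, hre, Subgraph.verts_inf]
          exact ⟨hvi, hvj⟩
        obtain ⟨a, b, hab, ha, hb⟩ :=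
          aux_interior_two_neighbors r hrp hvr hcon.1 hcon.2
        have hrlej : r.toSubgraph ≤ (c j).toSubgraph := hre ▸ inf_le_right
        have hrlei : r.toSubgraph ≤ (c i₀).toSubgraph := hre ▸ inf_le_left
        have hsubj : ({a, b} : Set V) ⊆ N j := by
          intro z hz
          rcases hz with rfl | hz
          · exact hrlej.2 ha
          · rw [Set.mem_singleton_iff] at hz; subst hz; exact hrlej.2 hb
        have heq : ({a, b} : Set V) = N j := by
          apply Set.eq_of_subset_of_ncard_le hsubj _ (hfin j)
          rw [Set.ncard_pair hab]
          exact hle j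
        have hwab : w ∈ ({a, b} : Set V) := heq ▸ hwj
        apply hwi
        rcases hwab with rfl | hwab
        · exact hrlei.2 ha
        · rw [Set.mem_singleton_iff] at hwab; subst hwab; exact hrlei.2 hb
      rcases lt_or_gt_of_ne hji with hlt | hgt
      · -- j < i₀
        exact ⟨j, i₀, hlt, x, y, r, hrp, by rw [hre, inf_comm], hvxy⟩
      · -- i₀ < j
        exact ⟨i₀, j, hgt, x, y, r, hrp, hre, hvxy⟩
  -- Step 2: counting via chosen endpoints
  let P : Fin (p + 1) → Fin (p + 1) → Prop := fun i j =>
    ∃ (x y : V) (r : G.Walk x y), r.IsPath ∧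
      r.toSubgraph = (c i).toSubgraph ⊓ (c j).toSubgraph
  let E : Fin (p + 1) × Fin (p + 1) → Finset V := fun q =>
    if _ : q.1 < q.2 then
      (if h2 : P q.1 q.2 then {h2.choose} else ∅)
    else
      (if h2 : P q.2 q.1 then {h2.choose_spec.choose} else ∅)
  have hScov : S ⊆ ↑((Finset.univ.offDiag : Finset (Fin (p + 1) × Fin (p + 1))).biUnion E) := by
    intro v hv
    obtain ⟨i, j, hij, x, y, r, hrp, hre, hvxy⟩ := key v hv
    have hPij : P i j := ⟨x, y, r, hrp, hre⟩
    obtain ⟨hr₀p, hr₀e⟩ := hPij.choose_spec.choose_spec.choose_spec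
    -- endpoints of r agree with the chosen endpoints
    have hx : x = hPij.choose ∨ x = hPij.choose_spec.choose :=
      aux_start_eq hPij.choose_spec.choose_spec.choose r hr₀p hrp (by rw [hre, hr₀e])
    have hy : y = hPij.choose ∨ y = hPij.choose_spec.choose :=
      aux_end_eq hPij.choose_spec.choose_spec.choose r hr₀p hrp (by rw [hre, hr₀e])
    have hv' : v = hPij.choose ∨ v = hPij.choose_spec.choose := by
      rcases hvxy with rfl | rfl
      · exact hx
      · exact hy
    simp only [Finset.coe_biUnion, Finset.coe_univ, Set.mem_iUnion]
    rcases hv' with hv1 | hv2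
    · refine ⟨(i, j), ?_, ?_⟩
      · simp [Finset.mem_offDiag, hij.ne]
      · show v ∈ E (i, j)
        simp only [E]
        rw [dif_pos hij, dif_pos hPij, Finset.mem_singleton]
        exact hv1
    · refine ⟨(j, i), ?_, ?_⟩
      · simp [Finset.mem_offDiag, hij.ne']
      · show v ∈ E (j, i)
        simp only [E]
        rw [dif_neg (lt_asymm hij), dif_pos hPij, Finset.mem_singleton]
        exact hv2
  have hcard : ∀ q, (E q).card ≤ 1 := by
    intro q
    simp only [E]
    split_ifs <;> simp
  have hbound := Finset.card_biUnion_le_card_mul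
    (Finset.univ.offDiag : Finset (Fin (p + 1) × Fin (p + 1))) E 1 (fun q _ => hcard q)
  have hoff : (Finset.univ.offDiag : Finset (Fin (p + 1) × Fin (p + 1))).card
      = (p + 1) * (p + 1) - (p + 1) := by
    rw [Finset.offDiag_card]
    simp
  have hfinal : ((Finset.univ.offDiag : Finset (Fin (p + 1) × Fin (p + 1))).biUnion E).card
      ≤ p * (p + 1) := by
    rw [mul_one] at hbound
    rw [hoff] at hbound
    have : (p + 1) * (p + 1) - (p + 1) = p * (p + 1) := by
      rw [Nat.succ_mul]
      omega
    omega
  calc S.ncard ≤ (↑((Finset.univ.offDiag : Finset (Fin (p + 1) × Fin (p + 1))).biUnion E) :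
        Set V).ncard := Set.ncard_le_ncard hScov (Finset.finite_toSet _)
    _ = ((Finset.univ.offDiag : Finset (Fin (p + 1) × Fin (p + 1))).biUnion E).card :=
        Set.ncard_coe_finset _
    _ ≤ p * (p + 1) := hfinal
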